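/- Let q ≥ 2 and let A be an alphabet with q elements. Let (Emb, Ext) be an (n,r)-stegoscheme over A, and suppose there is an integer T with 0 < T such that every embedding makes at most T changes, i.e. d(x, Emb(x,m)) ≤ T for all x ∈ A^n and m ∈ A^r. If moreover q·T ≤ (q−1)·n, then r/n ≤ H_q(T/n), where H_q is the q-ary entropy function. (This is an equivalent form of the paper's bound e ≤ a / H_q^{-1}(a) relating the embedding efficiency e = r/T to the relative payload a = r/n.) -/

import Mathlib

/-- The `q`-ary entropy function (base-`q` logarithms), with the
convention `logb q 0 = 0` so that `Hq q 0 = 0`. -/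
noncomputable def Hq (q : ℕ) (x : ℝ) : ℝ :=
  x * Real.logb q (q - 1) - x * Real.logb q x - (1 - x) * Real.logb q (1 - x)

/-- For an `(n,r)`-stegoscheme over a `q`-ary alphabet in which every embedding makes at
most `T > 0` changes, if `q·T ≤ (q−1)·n` then `r/n ≤ H_q(T/n)`. -/
theorem stegoscheme_payload_le_entropy
    {A : Type*} [Fintype A] [DecidableEq A] {q n r T : ℕ}
    (hq : 2 ≤ q) (hcard : Fintype.card A = q)
    (Emb : (Fin n → A) → (Fin r → A) → (Fin n → A))
    (Ext : (Fin n → A) → (Fin r → A))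
    (hsteg : ∀ x m, Ext (Emb x m) = m)
    (hT : 0 < T)
    (hchanges : ∀ x m, hammingDist x (Emb x m) ≤ T)
    (hTn : q * T ≤ (q - 1) * n) :
    (r : ℝ) / n ≤ Hq q ((T : ℝ) / n) := by
  classical
  -- basic numeric facts
  have hn : 0 < n := by
    rcases Nat.eq_zero_or_pos n with h | h
    · subst h
      simp only [Nat.mul_zero] at hTn
      have := Nat.mul_pos (show 0 < q by omega) hT
      omega
    · exact h
  have hTltn : T < n := by
    have h1 : q * T ≤ q * n - n := by
      calc q * T ≤ (q - 1) * n := hTn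
        _ = q * n - n := by rw [Nat.sub_one_mul]
    have h2 : n ≤ q * n := Nat.le_mul_of_pos_left n (by omega)
    have h3 : q * T < q * n := by omega
    exact Nat.lt_of_mul_lt_mul_left h3
  have hn' : (0 : ℝ) < n := by exact_mod_cast hn
  set lam : ℝ := (T : ℝ) / n with hlamdef
  have hlam0 : 0 < lam := div_pos (by exact_mod_cast hT) hn'
  have hlam1 : lam < 1 := (div_lt_one hn').mpr (by exact_mod_cast hTltn)
  have hq1 : (1 : ℝ) < q := by exact_mod_cast (show 1 < q by omega)
  have hq0 : (0 : ℝ) < (q : ℝ) - 1 := by linarith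
  set p : ℝ := lam / ((q : ℝ) - 1) with hpdef
  have hp0 : 0 < p := div_pos hlam0 hq0
  set s0 : ℝ := 1 - lam with hs0def
  have hs0 : 0 < s0 := by simp only [hs0def]; linarith
  have hcastTn : (q : ℝ) * T ≤ ((q : ℝ) - 1) * n := by
    have h1 : ((q * T : ℕ) : ℝ) ≤ (((q - 1) * n : ℕ) : ℝ) := by exact_mod_cast hTn
    rwa [Nat.cast_mul, Nat.cast_mul, Nat.cast_sub (by omega : 1 ≤ q), Nat.cast_one] at h1
  have hqlam : (q : ℝ) * lam ≤ (q : ℝ) - 1 := by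
    rw [hlamdef, mul_div_assoc', div_le_iff₀ hn']
    nlinarith [hcastTn]
  have hps : p ≤ s0 := by
    rw [hpdef, div_le_iff₀ hq0]
    nlinarith [hqlam]
  -- the alphabet has at least two elements
  have hA : Nonempty A := Fintype.card_pos_iff.mp (by omega)
  obtain ⟨a0⟩ := hA
  obtain ⟨b, hb⟩ : ∃ b : A, b ≠ a0 := Fintype.exists_ne_of_one_lt_card (by omega) a0
  set x : Fin n → A := fun _ => a0 with hx
  have hdcard : ∀ y : Fin n → A,
      (Finset.univ.filter fun j => y j ≠ a0).card = hammingDist x y := by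
    intro y
    simp only [hammingDist, hx]
    congr 1
    apply Finset.filter_congr
    intro j _
    simp [ne_comm]
  -- the Hamming ball
  set B : Finset (Fin n → A) := Finset.univ.filter (fun y => hammingDist x y ≤ T) with hB
  -- Step A : q^r ≤ B.card
  have hstepA : q ^ r ≤ B.card := by
    have hinj : (Finset.univ : Finset (Fin r → A)).card ≤ B.card := by
      apply Finset.card_le_card_of_injOn (Emb x)
      · intro m _
        simp only [hB, Finset.mem_coe, Finset.mem_filter, Finset.mem_univ, true_and]
        exact hchanges x m
      · intro m1 _ m2 _ h
        have h1 := hsteg x m1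
        rw [h, hsteg] at h1
        exact h1.symm
    calc q ^ r = (Finset.univ : Finset (Fin r → A)).card := by
          rw [Finset.card_univ, Fintype.card_fun, hcard, Fintype.card_fin]
      _ ≤ B.card := hinj
  -- the collection of difference-supports
  set S : Finset (Finset (Fin n)) :=
    Finset.univ.powerset.filter (fun t => t.card ≤ T) with hS
  -- Step B : B.card ≤ ∑ t in S, (q-1)^t.card
  have hstepB : B.card ≤ ∑ t ∈ S, (q - 1) ^ t.card := by
    have hmaps : ∀ y ∈ B, (Finset.univ.filter fun j => y j ≠ a0) ∈ S := by
      intro y hy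
      simp only [hB, Finset.mem_filter, Finset.mem_univ, true_and] at hy
      simp only [hS, Finset.mem_filter, Finset.mem_powerset]
      exact ⟨Finset.subset_univ _, by rw [hdcard]; exact hy⟩
    rw [Finset.card_eq_sum_card_fiberwise hmaps]
    apply Finset.sum_le_sum
    intro t ht
    have hcardpi : Fintype.card ({j // j ∈ t} → {a : A // a ≠ a0})
        = (q - 1) ^ t.card := by
      rw [Fintype.card_fun]
      congr 1
      · have h1 := Fintype.card_subtype_compl (fun a : A => a = a0)
        simp only [Fintype.card_subtype_eq] at h1
        rw [hcard] at h1
        exact h1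
      · simp [Fintype.card_coe]
    rw [← hcardpi, ← Finset.card_univ]
    apply Finset.card_le_card_of_injOn
      (fun y (j : {j // j ∈ t}) =>
        if h : y j.val ≠ a0 then (⟨y j.val, h⟩ : {a : A // a ≠ a0}) else ⟨b, hb⟩)
    · intro y _; exact Finset.mem_univ _
    · intro y1 hy1 y2 hy2 h
      simp only [Finset.mem_coe, Finset.mem_filter] at hy1 hy2
      funext j
      by_cases hj : j ∈ t
      · have hj1 : y1 j ≠ a0 := by
          have : j ∈ Finset.univ.filter fun i => y1 i ≠ a0 := by rw [hy1.2]; exact hj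
          simpa using this
        have hj2 : y2 j ≠ a0 := by
          have : j ∈ Finset.univ.filter fun i => y2 i ≠ a0 := by rw [hy2.2]; exact hj
          simpa using this
        have := congrFun h ⟨j, hj⟩
        simp only [dif_pos hj1, dif_pos hj2] at this
        exact congrArg Subtype.val this
      · have h1 : y1 j = a0 := by
          by_contra hne
          exact hj (hy1.2 ▸ (Finset.mem_filter.mpr ⟨Finset.mem_univ _, hne⟩))
        have h2 : y2 j = a0 := by
          by_contra hne
          exact hj (hy2.2 ▸ (Finset.mem_filter.mpr ⟨Finset.mem_univ _, hne⟩))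
        rw [h1, h2]
  -- Step C : the sum is at most (p^T * s0^(n-T))⁻¹
  set D : ℝ := p ^ T * s0 ^ (n - T) with hD
  have hD0 : 0 < D := mul_pos (pow_pos hp0 T) (pow_pos hs0 _)
  have hkey : (∑ t ∈ S, ((q : ℝ) - 1) ^ t.card) * D ≤ 1 := by
    rw [Finset.sum_mul]
    have hterm : ∀ t ∈ S, ((q : ℝ) - 1) ^ t.card * D
        ≤ lam ^ t.card * s0 ^ (n - t.card) := by
      intro t ht
      simp only [hS, Finset.mem_filter, Finset.mem_powerset] at ht
      have hc : t.card ≤ T := ht.2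
      have hcn : t.card ≤ n := le_trans hc hTltn.le
      have hDle : D ≤ p ^ t.card * s0 ^ (n - t.card) := by
        have e1 : p ^ T = p ^ t.card * p ^ (T - t.card) := by
          rw [← pow_add]; congr 1; omega
        have e2 : s0 ^ (n - t.card) = s0 ^ (T - t.card) * s0 ^ (n - T) := by
          rw [← pow_add]; congr 1; omega
        rw [hD, e1, e2]
        have : p ^ (T - t.card) ≤ s0 ^ (T - t.card) :=
          pow_le_pow_left₀ hp0.le hps _
        calc p ^ t.card * p ^ (T - t.card) * s0 ^ (n - T)
            ≤ p ^ t.card * s0 ^ (T - t.card) * s0 ^ (n - T) := by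
              apply mul_le_mul_of_nonneg_right _ (pow_pos hs0 _).le
              exact mul_le_mul_of_nonneg_left this (pow_pos hp0 _).le
          _ = p ^ t.card * (s0 ^ (T - t.card) * s0 ^ (n - T)) := by ring
      calc ((q : ℝ) - 1) ^ t.card * D ≤ ((q : ℝ) - 1) ^ t.card
            * (p ^ t.card * s0 ^ (n - t.card)) := by
            exact mul_le_mul_of_nonneg_left hDle (pow_pos hq0 _).le
        _ = (((q : ℝ) - 1) * p) ^ t.card * s0 ^ (n - t.card) := by
            rw [mul_pow]; ring
        _ = lam ^ t.card * s0 ^ (n - t.card) := by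
            rw [hpdef, mul_div_cancel₀ _ hq0.ne']
    calc ∑ t ∈ S, ((q : ℝ) - 1) ^ t.card * D
        ≤ ∑ t ∈ S, lam ^ t.card * s0 ^ (n - t.card) := Finset.sum_le_sum hterm
      _ ≤ ∑ t ∈ (Finset.univ : Finset (Fin n)).powerset,
            lam ^ t.card * s0 ^ (n - t.card) := by
          apply Finset.sum_le_sum_of_subset_of_nonneg
          · exact Finset.filter_subset _ _
          · intro t _ _
            positivity
      _ = ∑ t ∈ (Finset.univ : Finset (Fin n)).powerset,
            (∏ _j ∈ t, lam) * ∏ _j ∈ Finset.univ \ t, s0 := by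
          apply Finset.sum_congr rfl
          intro t ht
          rw [Finset.prod_const, Finset.prod_const]
          congr 2
          rw [Finset.card_sdiff_of_subset (Finset.subset_univ t), Finset.card_univ, Fintype.card_fin]
      _ = ∏ _j : Fin n, (lam + s0) := (Finset.prod_add _ _ _).symm
      _ = 1 := by
          rw [Finset.prod_const]
          simp [hs0def]
  -- combine : q^r ≤ 1 / D
  have hqr : ((q : ℝ)) ^ r ≤ 1 / D := by
    rw [le_div_iff₀ hD0]
    have h1 : ((q : ℝ)) ^ r ≤ ∑ t ∈ S, ((q : ℝ) - 1) ^ t.card := by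
      have h2 : (q : ℝ) ^ r = ((q ^ r : ℕ) : ℝ) := by push_cast; ring
      rw [h2]
      have h3 : ((q ^ r : ℕ) : ℝ) ≤ ((∑ t ∈ S, (q - 1) ^ t.card : ℕ) : ℝ) := by
        exact_mod_cast le_trans hstepA hstepB
      calc ((q ^ r : ℕ) : ℝ) ≤ ((∑ t ∈ S, (q - 1) ^ t.card : ℕ) : ℝ) := h3
        _ = ∑ t ∈ S, ((q : ℝ) - 1) ^ t.card := by
            push_cast [Nat.cast_sub (show 1 ≤ q by omega)]
            ring_nf
    calc ((q : ℝ)) ^ r * D ≤ (∑ t ∈ S, ((q : ℝ) - 1) ^ t.card) * D :=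
          mul_le_mul_of_nonneg_right h1 hD0.le
      _ ≤ 1 := hkey
  -- Step D : take logarithms
  have hlogb : (r : ℝ) ≤ Real.logb q (1 / D) := by
    have h1 : (r : ℝ) = Real.logb q ((q : ℝ) ^ r) := by
      rw [Real.logb_pow, Real.logb_self_eq_one hq1, mul_one]
    rw [h1]
    exact Real.logb_le_logb_of_le hq1 (pow_pos (by linarith) r) hqr
  have hcastnT : ((n - T : ℕ) : ℝ) = (n : ℝ) - T := by
    rw [Nat.cast_sub hTltn.le]
  have hlogD : Real.logb q (1 / D)
      = (T : ℝ) * Real.logb q ((q : ℝ) - 1) - (T : ℝ) * Real.logb q lam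
        - ((n : ℝ) - (T : ℝ)) * Real.logb q s0 := by
    rw [one_div, Real.logb_inv, hD,
      Real.logb_mul (pow_ne_zero _ hp0.ne') (pow_ne_zero _ hs0.ne'),
      Real.logb_pow, Real.logb_pow, hpdef,
      Real.logb_div hlam0.ne' hq0.ne', hcastnT]
    ring
  have hfin : (r : ℝ) ≤ (n : ℝ) * Hq q lam := by
    have hnl : (n : ℝ) * lam = (T : ℝ) := by
      rw [hlamdef]; field_simp
    have hns : (n : ℝ) * (1 - lam) = (n : ℝ) - T := by
      rw [hlamdef]; field_simp
    have : (n : ℝ) * Hq q lam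
        = (T : ℝ) * Real.logb q ((q : ℝ) - 1) - (T : ℝ) * Real.logb q lam
          - ((n : ℝ) - (T : ℝ)) * Real.logb q s0 := by
      simp only [Hq, hs0def]
      linear_combination (Real.logb q ((q : ℝ) - 1) - Real.logb q lam) * hnl
        - Real.logb q (1 - lam) * hns
    rw [this, ← hlogD]
    exact hlogb
  rw [div_le_iff₀ hn']
  calc (r : ℝ) ≤ (n : ℝ) * Hq q lam := hfin
    _ = Hq q ((T : ℝ) / n) * n := by rw [hlamdef]; ring
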